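/- arXiv:2605.22965 — 3 statements merged into one kernel-verified Lean document; each statement's English description precedes it below -/
import Mathlib

section
/- Performance-difference identity: let π be a stationary policy that is proper from the initial state x, let V* be the bounded optimal value function with V*(t) = 0 satisfying the Bellman equation V* = T V*, and define the optimal advantage A*(x,u) = f(x,u) + ∫ V*(F(x,u,w)) dμ(w) − V*(x). Then J^π(x) − V*(x) = E[ Σ_{k=0}^{τ−1} A*(x_k, π(x_k)) ]. -/
open MeasureTheory ProbabilityTheory Filter
open scoped ENNReal

open Classical in
/-- Bellman operator of the SSP: `(T V)(x) = inf_{u ∈ U(x)} ( f(x,u) + ∫ V(F(x,u,w)) dμ(w) )`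
for nonterminal `x`, and `(T V)(t) = 0`. -/
noncomputable def bellman {X U W : Type*} [MeasurableSpace W] (μ : Measure W)
    (t : X) (Ua : X → Set U) (f : X → U → ℝ) (F : X → U → W → X)
    (V : X → ℝ) (x : X) : ℝ :=
  if x = t then 0 else ⨅ u : Ua x, (f x (u : U) + ∫ w, V (F x (u : U) w) ∂μ)

/-- Closed-loop trajectory driven by a disturbance sequence `ω : ℕ → W`:
`x₀ = x`, `x_{k+1} = F(x_k, π(x_k), ω_k)`. -/
def traj {X U W : Type*} (F : X → U → W → X) (π : X → U) (x : X) (ω : ℕ → W) : ℕ → X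
  | 0 => x
  | k + 1 => F (traj F π x ω k) (π (traj F π x ω k)) (ω k)

/-- The trajectory as a family of random variables on an abstract sample space `Ω`,
given the disturbance random variables `ξ k : Ω → W`. -/
def trajOn {X U W Ω : Type*} (F : X → U → W → X) (π : X → U) (x : X)
    (ξ : ℕ → Ω → W) (k : ℕ) (ω : Ω) : X :=
  traj F π x (fun i => ξ i ω) k

/-- Hitting time `τ = inf { k ≥ 0 : x_k = t }` of the terminal state (`∞` if never reached),
valued in `ℝ≥0∞`. -/
noncomputable def hitTime {X Ω : Type*} (t : X) (Y : ℕ → Ω → X) (ω : Ω) : ℝ≥0∞ :=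
  ⨅ (k : ℕ) (_ : Y k ω = t), (k : ℝ≥0∞)

/-- Total expected cost `J = E[ Σ_{k=0}^{τ-1} f(x_k, π(x_k)) ]` (in `ℝ≥0∞`; the stage cost
is nonnegative). -/
noncomputable def totalCost {X U Ω : Type*} [MeasurableSpace Ω] (P : Measure Ω)
    (t : X) (f : X → U → ℝ) (π : X → U) (Y : ℕ → Ω → X) : ℝ≥0∞ :=
  ∫⁻ ω, ∑' (k : ℕ), (if (k : ℝ≥0∞) < hitTime t Y ω
    then ENNReal.ofReal (f (Y k ω) (π (Y k ω))) else 0) ∂P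

/-- Expected hitting time `E[τ]` (in `ℝ≥0∞`). -/
noncomputable def expHit {X Ω : Type*} [MeasurableSpace Ω] (P : Measure Ω)
    (t : X) (Y : ℕ → Ω → X) : ℝ≥0∞ :=
  ∫⁻ ω, hitTime t Y ω ∂P

/-- Optimal advantage `A*(x,u) = f(x,u) + ∫ V*(F(x,u,w)) dμ(w) - V*(x)`. -/
noncomputable def advantage {X U W : Type*} [MeasurableSpace W] (μ : Measure W)
    (f : X → U → ℝ) (F : X → U → W → X) (Vstar : X → ℝ) (y : X) (u : U) : ℝ :=
  f y u + ∫ w, Vstar (F y u w) ∂μ - Vstar y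

private lemma traj_congr' {X U W : Type*} (F : X → U → W → X) (π : X → U) (x : X)
    {ω₁ ω₂ : ℕ → W} {m : ℕ} (h : ∀ i, i < m → ω₁ i = ω₂ i) :
    ∀ j, j ≤ m → traj F π x ω₁ j = traj F π x ω₂ j := by
  intro j
  induction j with
  | zero => intro _; rfl
  | succ j ih =>
    intro hj
    show F _ _ _ = F _ _ _
    rw [ih (Nat.le_of_succ_le hj), h j (Nat.lt_of_succ_le hj)]

/-- Performance-difference identity: for a proper stationary admissible policy `π` from `x`,
`J^π(x) - V*(x) = E[ Σ_{k=0}^{τ-1} A*(x_k, π(x_k)) ]`, stated in `EReal` as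
`J^π(x) = V*(x) + E[ Σ_{k=0}^{τ-1} A*(x_k, π(x_k)) ]`. -/
theorem performance_difference_identity
    {X U W Ω : Type*} [MeasurableSpace X] [MeasurableSingletonClass X]
    [MeasurableSpace U] [MeasurableSpace W] [MeasurableSpace Ω]
    (μ : Measure W) [IsProbabilityMeasure μ] (P : Measure Ω) [IsProbabilityMeasure P]
    (t : X) (u0 : U) (Ua : X → Set U) (F : X → U → W → X) (f : X → U → ℝ)
    -- SSP model: nonempty control sets, nonnegative measurable stage cost, measurable dynamics,
    -- absorbing cost-free terminal state
    (hUne : ∀ y, (Ua y).Nonempty) (hfnn : ∀ y u, 0 ≤ f y u)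
    (hFmeas : Measurable fun p : X × U × W => F p.1 p.2.1 p.2.2)
    (hfmeas : Measurable fun p : X × U => f p.1 p.2)
    (hUt : Ua t = {u0}) (hft : f t u0 = 0) (hFt : ∀ w, F t u0 w = t)
    -- V* : bounded measurable, V*(t)=0, Bellman fixed point, well-defined one-step integrals
    (Vstar : X → ℝ) (hVsmeas : Measurable Vstar) (hVsbdd : ∃ C, ∀ y, |Vstar y| ≤ C)
    (hVst : Vstar t = 0) (hVsfix : ∀ y, Vstar y = bellman μ t Ua f F Vstar y)
    (hVsint : ∀ y u, Integrable (fun w => Vstar (F y u w)) μ)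
    (π : X → U) (hπmeas : Measurable π) (hπadm : ∀ y, π y ∈ Ua y)
    -- i.i.d. disturbance sequence with common law μ on an abstract probability space
    (ξ : ℕ → Ω → W) (hξmeas : ∀ k, Measurable (ξ k))
    (hξindep : iIndepFun ξ P)
    (hξlaw : ∀ k, P.map (ξ k) = μ)
    -- properness of the closed loop from x: τ < ∞ a.s. and J(x) < ∞
    (x : X)
    (hproper_tau : ∀ᵐ ω ∂P, hitTime t (trajOn F π x ξ) ω < ⊤)
    (hproper_J : totalCost P t f π (trajOn F π x ξ) < ⊤) :
    (totalCost P t f π (trajOn F π x ξ) : EReal)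
      = (Vstar x : EReal) +
        ((∫⁻ ω, ∑' (k : ℕ), (if (k : ℝ≥0∞) < hitTime t (trajOn F π x ξ) ω
            then ENNReal.ofReal
              (advantage μ f F Vstar (trajOn F π x ξ k ω) (π (trajOn F π x ξ k ω)))
            else 0) ∂P : ℝ≥0∞) : EReal) := by
    classical
  obtain ⟨C, hC⟩ := hVsbdd
  have hC0 : 0 ≤ C := le_trans (abs_nonneg _) (hC t)
  have hWne : Nonempty W := by
    by_contra h
    rw [not_nonempty_iff] at h
    have h1 := measure_univ (μ := μ)
    rw [Set.univ_eq_empty_iff.2 h] at h1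
    simp at h1
  set Y : ℕ → Ω → X := trajOn F π x ξ with hYdef
  have hYmeas : ∀ k, Measurable (Y k) := by
    intro k
    induction k with
    | zero => exact measurable_const
    | succ k ih =>
      have hrw : Y (k + 1) = fun ω => F (Y k ω) (π (Y k ω)) (ξ k ω) := rfl
      rw [hrw]
      exact hFmeas.comp (ih.prodMk ((hπmeas.comp ih).prodMk (hξmeas k)))
  have hitLt : ∀ (k : ℕ) (ω : Ω), ((k : ℝ≥0∞) < hitTime t Y ω ↔ ∀ j ≤ k, Y j ω ≠ t) := by
    intro k ω
    constructor
    · intro h j hj hQ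
      have hle : hitTime t Y ω ≤ (j : ℝ≥0∞) := iInf_le_of_le j (iInf_le_of_le hQ le_rfl)
      have : (k : ℝ≥0∞) < (k : ℝ≥0∞) :=
        lt_of_lt_of_le h (hle.trans (by exact_mod_cast hj))
      exact lt_irrefl _ this
    · intro h
      by_contra hk
      push_neg at hk
      have hlt : hitTime t Y ω < (k : ℝ≥0∞) + 1 :=
        lt_of_le_of_lt hk (ENNReal.lt_add_right (by simp) one_ne_zero)
      rw [hitTime, iInf_lt_iff] at hlt
      obtain ⟨j, hj⟩ := hlt
      rw [iInf_lt_iff] at hj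
      obtain ⟨hjt, hjk⟩ := hj
      have hjk' : (j : ℝ≥0∞) < ((k + 1 : ℕ) : ℝ≥0∞) := by
        rw [Nat.cast_add, Nat.cast_one]; exact hjk
      have : j ≤ k := Nat.lt_succ_iff.mp (by exact_mod_cast hjk')
      exact h j this hjt
  set s : ℕ → Set Ω := fun n => {ω | (n : ℝ≥0∞) < hitTime t Y ω} with hsdef
  have hsmeas : ∀ n, MeasurableSet (s n) := by
    intro n
    have hrw : s n = ⋂ (j : ℕ), ⋂ (_ : j ≤ n), (Y j) ⁻¹' {t}ᶜ := by
      ext ω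
      simp only [hsdef, Set.mem_setOf_eq, hitLt n ω, Set.mem_iInter, Set.mem_preimage,
        Set.mem_compl_iff, Set.mem_singleton_iff]
    rw [hrw]
    exact MeasurableSet.iInter fun j => MeasurableSet.iInter fun _ =>
      (hYmeas j) (measurableSet_singleton t).compl
  set e : ℕ → Ω → ℝ := fun n => (s n).indicator (fun _ => (1 : ℝ)) with hedef
  have hemeas : ∀ n, Measurable (e n) := fun n => measurable_const.indicator (hsmeas n)
  have he_mem : ∀ n ω, ω ∈ s n → e n ω = 1 := fun n ω h => Set.indicator_of_mem h _
  have he_notmem : ∀ n ω, ω ∉ s n → e n ω = 0 := fun n ω h => Set.indicator_of_notMem h _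
  have he_nonneg : ∀ n ω, 0 ≤ e n ω := by
    intro n ω
    by_cases h : ω ∈ s n
    · rw [he_mem n ω h]; norm_num
    · rw [he_notmem n ω h]
  have he_le_one : ∀ n ω, e n ω ≤ 1 := by
    intro n ω
    by_cases h : ω ∈ s n
    · rw [he_mem n ω h]
    · rw [he_notmem n ω h]; norm_num
  have hIbd : ∀ y u, |∫ w, Vstar (F y u w) ∂μ| ≤ C := by
    intro y u
    calc |∫ w, Vstar (F y u w) ∂μ| ≤ ∫ w, |Vstar (F y u w)| ∂μ := by
          have h1 := norm_integral_le_integral_norm (μ := μ) fun w => Vstar (F y u w)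
          simpa [Real.norm_eq_abs] using h1
    _ ≤ ∫ _w, C ∂μ := integral_mono (hVsint y u).abs (integrable_const C) fun w => hC _
    _ = C := by simp
  set G : X → ℝ := fun y => ∫ w, Vstar (F y (π y) w) ∂μ with hGdef
  have hGbdd : ∀ y, |G y| ≤ C := fun y => hIbd y (π y)
  have hGmeas : Measurable G := by
    have hm2 : Measurable fun p : X × W => Vstar (F p.1 (π p.1) p.2) :=
      hVsmeas.comp (hFmeas.comp (measurable_fst.prodMk
        ((hπmeas.comp measurable_fst).prodMk measurable_snd)))
    exact hm2.stronglyMeasurable.integral_prod_right'.measurable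
  have hAnn : ∀ y, y ≠ t → 0 ≤ advantage μ f F Vstar y (π y) := by
    intro y hy
    have hfix := hVsfix y
    rw [bellman, if_neg hy] at hfix
    have hbdd : BddBelow (Set.range fun u : Ua y => f y (u : U) + ∫ w, Vstar (F y (u : U) w) ∂μ) := by
      refine ⟨-C, ?_⟩
      rintro r ⟨u, rfl⟩
      have h1 : -C ≤ ∫ w, Vstar (F y (u : U) w) ∂μ := neg_le_of_abs_le (hIbd y (u : U))
      have h2 := hfnn y (u : U)
      dsimp only
      linarith
    have hle : Vstar y ≤ f y (π y) + ∫ w, Vstar (F y (π y) w) ∂μ := by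
      rw [hfix]
      exact ciInf_le hbdd (⟨π y, hπadm y⟩ : Ua y)
    have : advantage μ f F Vstar y (π y)
        = f y (π y) + (∫ w, Vstar (F y (π y) w) ∂μ) - Vstar y := rfl
    rw [this]
    linarith
  have hbint : ∀ (g : Ω → ℝ) (D : ℝ), Measurable g → (∀ ω, |g ω| ≤ D) → Integrable g P := by
    intro g D hg hb
    exact ⟨hg.aestronglyMeasurable,
      HasFiniteIntegral.of_bounded (C := D)
        (Filter.Eventually.of_forall fun ω => by rw [Real.norm_eq_abs]; exact hb ω)⟩
  -- the stage-cost series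
  have hfY_meas : ∀ n, Measurable fun ω => e n ω * f (Y n ω) (π (Y n ω)) := fun n =>
    (hemeas n).mul (hfmeas.comp ((hYmeas n).prodMk (hπmeas.comp (hYmeas n))))
  have hif_f : ∀ (n : ℕ) (ω : Ω),
      (if (n : ℝ≥0∞) < hitTime t Y ω then ENNReal.ofReal (f (Y n ω) (π (Y n ω))) else 0)
        = ENNReal.ofReal (e n ω * f (Y n ω) (π (Y n ω))) := by
    intro n ω
    by_cases h : ω ∈ s n
    · have h' : ((n : ℕ) : ℝ≥0∞) < hitTime t Y ω := h
      rw [if_pos h', he_mem n ω h, one_mul]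
    · have h' : ¬(((n : ℕ) : ℝ≥0∞) < hitTime t Y ω) := h
      rw [if_neg h', he_notmem n ω h, zero_mul, ENNReal.ofReal_zero]
  set aN : ℕ → ℝ≥0∞ := fun n => ∫⁻ ω, ENNReal.ofReal (e n ω * f (Y n ω) (π (Y n ω))) ∂P
    with haNdef
  have htc : totalCost P t f π Y = ∑' n, aN n := by
    rw [totalCost]
    rw [lintegral_congr fun ω => tsum_congr fun k => hif_f k ω]
    exact lintegral_tsum fun n => ((hfY_meas n).ennreal_ofReal).aemeasurable
  have haNtop : ∀ n, aN n ≠ ⊤ := by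
    intro n
    have : aN n ≤ ∑' m, aN m := ENNReal.le_tsum n
    rw [← htc] at this
    exact (lt_of_le_of_lt this hproper_J).ne
  have hαint : ∀ n, Integrable (fun ω => e n ω * f (Y n ω) (π (Y n ω))) P := by
    intro n
    refine ⟨(hfY_meas n).aestronglyMeasurable, ?_⟩
    rw [hasFiniteIntegral_iff_ofReal (Filter.Eventually.of_forall fun ω =>
      mul_nonneg (he_nonneg n ω) (hfnn _ _))]
    exact lt_of_le_of_lt (le_of_eq rfl) (lt_of_le_of_ne le_top (haNtop n))
  set α : ℕ → ℝ := fun n => ∫ ω, e n ω * f (Y n ω) (π (Y n ω)) ∂P with hαdef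
  have hα_nonneg : ∀ n, 0 ≤ α n := fun n =>
    integral_nonneg fun ω => mul_nonneg (he_nonneg n ω) (hfnn _ _)
  have hαofReal : ∀ n, ENNReal.ofReal (α n) = aN n := fun n =>
    ofReal_integral_eq_lintegral_ofReal (hαint n)
      (Filter.Eventually.of_forall fun ω => mul_nonneg (he_nonneg n ω) (hfnn _ _))
  have hαtoReal : ∀ n, α n = (aN n).toReal := by
    intro n
    rw [← hαofReal n, ENNReal.toReal_ofReal (hα_nonneg n)]
  -- bounded integrands
  have hvmeas : ∀ n, Measurable fun ω => e n ω * Vstar (Y n ω) := fun n =>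
    (hemeas n).mul (hVsmeas.comp (hYmeas n))
  have hvbd : ∀ (n : ℕ) (ω : Ω) (g : Ω → ℝ), (∀ ω', |g ω'| ≤ C) → |e n ω * g ω| ≤ C := by
    intro n ω g hg
    rw [abs_mul]
    calc |e n ω| * |g ω| ≤ 1 * C := by
          refine mul_le_mul ?_ (hg ω) (abs_nonneg _) zero_le_one
          rw [abs_of_nonneg (he_nonneg n ω)]; exact he_le_one n ω
    _ = C := one_mul C
  have hvint : ∀ n, Integrable (fun ω => e n ω * Vstar (Y n ω)) P := fun n =>
    hbint _ C (hvmeas n) fun ω => hvbd n ω _ fun ω' => hC _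
  have hGint : ∀ n, Integrable (fun ω => e n ω * G (Y n ω)) P := fun n =>
    hbint _ C ((hemeas n).mul (hGmeas.comp (hYmeas n))) fun ω => hvbd n ω _ fun ω' => hGbdd _
  set v : ℕ → ℝ := fun n => ∫ ω, e n ω * Vstar (Y n ω) ∂P with hvdef
  -- the key one-step (martingale) identity
  have hkey : ∀ n, (∫ ω, e n ω * Vstar (Y (n + 1) ω) ∂P) = ∫ ω, e n ω * G (Y n ω) ∂P := by
    intro n
    set S : Finset ℕ := Finset.range n with hSdef
    set h : Ω → (S → W) := fun ω (i : S) => ξ (i : ℕ) ω with hhdef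
    have hhmeas : Measurable h := measurable_pi_lambda _ fun i => hξmeas _
    have hindep : IndepFun h (ξ n) P := by
      have h2 := hξindep.indepFun_finset S {n}
        (by simp [hSdef, Finset.disjoint_singleton_right]) hξmeas
      have h3 := h2.comp measurable_id
        (measurable_pi_apply (⟨n, Finset.mem_singleton_self n⟩ : ({n} : Finset ℕ)))
      exact h3
    have hmap : P.map (fun ω => (h ω, ξ n ω)) = (P.map h).prod μ := by
      rw [← hξlaw n]
      exact (indepFun_iff_map_prod_eq_prod_map_map hhmeas.aemeasurable
        (hξmeas n).aemeasurable).1 hindep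
    set ext : (S → W) → ℕ → W :=
      fun vv i => if hi : i ∈ S then vv ⟨i, hi⟩ else Classical.arbitrary W with hextdef
    have hext_meas : ∀ i, Measurable fun vv : S → W => ext vv i := by
      intro i
      by_cases hi : i ∈ S
      · simpa [hextdef, hi] using measurable_pi_apply (⟨i, hi⟩ : S)
      · simpa [hextdef, hi] using measurable_const
    have htr_meas : ∀ j, Measurable fun vv : S → W => traj F π x (ext vv) j := by
      intro j
      induction j with
      | zero => exact measurable_const
      | succ j ih =>
        have hrw : (fun vv : S → W => traj F π x (ext vv) (j + 1))
            = fun vv => F (traj F π x (ext vv) j) (π (traj F π x (ext vv) j)) (ext vv j) := rfl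
        rw [hrw]
        exact hFmeas.comp (ih.prodMk ((hπmeas.comp ih).prodMk (hext_meas j)))
    have hagree : ∀ ω j, j ≤ n → traj F π x (ext (h ω)) j = Y j ω := by
      intro ω j hj
      exact traj_congr' F π x
        (fun i hi => by
          have hiS : i ∈ S := Finset.mem_range.2 hi
          simp [hextdef, hiS, hhdef]) j hj
    set A : Set (S → W) := {vv | ∀ j ≤ n, traj F π x (ext vv) j ≠ t} with hAdef
    have hAmeas : MeasurableSet A := by
      have hrw : A = ⋂ (j : ℕ), ⋂ (_ : j ≤ n), (fun vv => traj F π x (ext vv) j) ⁻¹' {t}ᶜ := by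
        ext vv
        simp only [hAdef, Set.mem_setOf_eq, Set.mem_iInter, Set.mem_preimage,
          Set.mem_compl_iff, Set.mem_singleton_iff]
      rw [hrw]
      exact MeasurableSet.iInter fun j => MeasurableSet.iInter fun _ =>
        (htr_meas j) (measurableSet_singleton t).compl
    set χ : (S → W) → ℝ := A.indicator (fun _ => (1 : ℝ)) with hχdef
    set Ψ : (S → W) → X := fun vv => traj F π x (ext vv) n with hΨdef
    set Φ : ((S → W) × W) → ℝ := fun p => χ p.1 * Vstar (F (Ψ p.1) (π (Ψ p.1)) p.2) with hΦdef
    have hχmeas : Measurable χ := measurable_const.indicator hAmeas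
    have hΨmeas : Measurable Ψ := htr_meas n
    have hΦmeas : Measurable Φ :=
      (hχmeas.comp measurable_fst).mul (hVsmeas.comp (hFmeas.comp
        (((hΨmeas.comp measurable_fst)).prodMk
          ((hπmeas.comp (hΨmeas.comp measurable_fst)).prodMk measurable_snd))))
    have hχe : ∀ ω, χ (h ω) = e n ω := by
      intro ω
      have hiff : h ω ∈ A ↔ ω ∈ s n := by
        simp only [hAdef, Set.mem_setOf_eq, hsdef, hitLt n ω]
        constructor
        · intro hme j hj
          rw [← hagree ω j hj]; exact hme j hj
        · intro hme j hj
          rw [hagree ω j hj]; exact hme j hj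
      by_cases hmem : ω ∈ s n
      · rw [show χ (h ω) = 1 from Set.indicator_of_mem (hiff.2 hmem) _, he_mem n ω hmem]
      · rw [show χ (h ω) = 0 from Set.indicator_of_notMem (fun hc => hmem (hiff.1 hc)) _,
          he_notmem n ω hmem]
    have hΨY : ∀ ω, Ψ (h ω) = Y n ω := fun ω => hagree ω n le_rfl
    have hΦeval : ∀ ω, Φ (h ω, ξ n ω) = e n ω * Vstar (Y (n + 1) ω) := by
      intro ω
      have hY1 : Y (n + 1) ω = F (Y n ω) (π (Y n ω)) (ξ n ω) := rfl
      show χ (h ω) * Vstar (F (Ψ (h ω)) (π (Ψ (h ω))) (ξ n ω)) = _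
      rw [hχe ω, hΨY ω, hY1]
    haveI : IsProbabilityMeasure (P.map h) := Measure.isProbabilityMeasure_map hhmeas.aemeasurable
    have hχbd : ∀ vv, |χ vv| ≤ 1 := by
      intro vv
      by_cases hv : vv ∈ A
      · rw [hχdef, Set.indicator_of_mem hv]; norm_num
      · rw [hχdef, Set.indicator_of_notMem hv]; norm_num
    have hΦint : Integrable Φ ((P.map h).prod μ) := by
      refine ⟨hΦmeas.aestronglyMeasurable,
        HasFiniteIntegral.of_bounded (C := C) (Filter.Eventually.of_forall fun p => ?_)⟩
      rw [Real.norm_eq_abs]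
      show |χ p.1 * Vstar (F (Ψ p.1) (π (Ψ p.1)) p.2)| ≤ C
      rw [abs_mul]
      calc |χ p.1| * |Vstar _| ≤ 1 * C :=
            mul_le_mul (hχbd p.1) (hC _) (abs_nonneg _) zero_le_one
      _ = C := one_mul C
    have hχGmeas : Measurable fun vv => χ vv * G (Ψ vv) := hχmeas.mul (hGmeas.comp hΨmeas)
    calc (∫ ω, e n ω * Vstar (Y (n + 1) ω) ∂P)
        = ∫ ω, Φ (h ω, ξ n ω) ∂P :=
          integral_congr_ae (Filter.Eventually.of_forall fun ω => (hΦeval ω).symm)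
      _ = ∫ p, Φ p ∂((P.map h).prod μ) := by
          rw [← hmap]
          exact (integral_map (hhmeas.prodMk (hξmeas n)).aemeasurable
            hΦmeas.aestronglyMeasurable).symm
      _ = ∫ vv, ∫ w, Φ (vv, w) ∂μ ∂(P.map h) := integral_prod Φ hΦint
      _ = ∫ vv, χ vv * G (Ψ vv) ∂(P.map h) := by
          refine integral_congr_ae (Filter.Eventually.of_forall fun vv => ?_)
          show (∫ w, χ vv * Vstar (F (Ψ vv) (π (Ψ vv)) w) ∂μ) = χ vv * G (Ψ vv)
          rw [integral_const_mul]
      _ = ∫ ω, χ (h ω) * G (Ψ (h ω)) ∂P :=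
          integral_map hhmeas.aemeasurable hχGmeas.aestronglyMeasurable
      _ = ∫ ω, e n ω * G (Y n ω) ∂P := by
          refine integral_congr_ae (Filter.Eventually.of_forall fun ω => ?_)
          show χ (h ω) * G (Ψ (h ω)) = e n ω * G (Y n ω)
          rw [hχe ω, hΨY ω]
  -- indicator-shift identity
  have hshift : ∀ n ω, e n ω * Vstar (Y (n + 1) ω) = e (n + 1) ω * Vstar (Y (n + 1) ω) := by
    intro n ω
    by_cases h1 : ω ∈ s (n + 1)
    · have h0 : ω ∈ s n := by
        simp only [hsdef, Set.mem_setOf_eq, hitLt] at h1 ⊢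
        exact fun j hj => h1 j (hj.trans (Nat.le_succ n))
      rw [he_mem n ω h0, he_mem (n + 1) ω h1]
    · by_cases h0 : ω ∈ s n
      · have hYt : Y (n + 1) ω = t := by
          simp only [hsdef, Set.mem_setOf_eq, hitLt] at h1 h0
          push_neg at h1
          obtain ⟨j, hj, hjt⟩ := h1
          rcases Nat.eq_or_lt_of_le hj with hEq | hLt
          · rw [← hEq]; exact hjt
          · exact absurd hjt (h0 j (Nat.lt_succ_iff.mp hLt))
        rw [hYt, hVst, mul_zero, mul_zero]
      · rw [he_notmem n ω h0, he_notmem (n + 1) ω h1]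
  -- per-step identity
  set c : ℕ → ℝ := fun n => ∫ ω, e n ω * advantage μ f F Vstar (Y n ω) (π (Y n ω)) ∂P
    with hcdef
  have hEA : ∀ n ω, e n ω * advantage μ f F Vstar (Y n ω) (π (Y n ω))
      = e n ω * f (Y n ω) (π (Y n ω)) + e n ω * G (Y n ω) - e n ω * Vstar (Y n ω) := by
    intro n ω
    have : advantage μ f F Vstar (Y n ω) (π (Y n ω))
        = f (Y n ω) (π (Y n ω)) + G (Y n ω) - Vstar (Y n ω) := rfl
    rw [this]; ring
  have hcint : ∀ n, Integrable
      (fun ω => e n ω * advantage μ f F Vstar (Y n ω) (π (Y n ω))) P := by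
    intro n
    have hrw : (fun ω => e n ω * advantage μ f F Vstar (Y n ω) (π (Y n ω)))
        = fun ω => e n ω * f (Y n ω) (π (Y n ω)) + e n ω * G (Y n ω)
            - e n ω * Vstar (Y n ω) := funext (hEA n)
    rw [hrw]
    exact ((hαint n).add (hGint n)).sub (hvint n)
  have hstep : ∀ n, c n = α n + v (n + 1) - v n := by
    intro n
    have h2 : (∫ ω, e n ω * Vstar (Y (n + 1) ω) ∂P) = v (n + 1) :=
      integral_congr_ae (Filter.Eventually.of_forall fun ω => hshift n ω)
    have h1 : c n = α n + (∫ ω, e n ω * G (Y n ω) ∂P) - v n := by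
      have hsum_int : Integrable (fun ω => e n ω * f (Y n ω) (π (Y n ω))
          + e n ω * G (Y n ω)) P := (hαint n).add (hGint n)
      rw [hcdef]
      dsimp only
      rw [integral_congr_ae (Filter.Eventually.of_forall (hEA n)),
        integral_sub hsum_int (hvint n),
        integral_add (hαint n) (hGint n)]
    rw [h1, ← hkey n, h2]
  have htel : ∀ N, (∑ n ∈ Finset.range N, c n)
      = (∑ n ∈ Finset.range N, α n) + v N - v 0 := by
    intro N
    induction N with
    | zero => simp
    | succ N ih =>
      rw [Finset.sum_range_succ, Finset.sum_range_succ, ih, hstep N]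
      ring
  have hY0 : ∀ ω, Y 0 ω = x := fun ω => rfl
  have hv0 : v 0 = Vstar x := by
    by_cases hx : x = t
    · have hz : ∀ ω, e 0 ω = 0 := by
        intro ω
        refine he_notmem 0 ω ?_
        simp only [hsdef, Set.mem_setOf_eq, hitLt]
        push_neg
        exact ⟨0, le_rfl, by rw [hY0 ω]; exact hx⟩
      have : v 0 = 0 := by
        rw [hvdef]
        dsimp only
        rw [integral_congr_ae (Filter.Eventually.of_forall fun ω => by
          show e 0 ω * Vstar (Y 0 ω) = (0:ℝ)
          rw [hz ω, zero_mul] : (fun ω => e 0 ω * Vstar (Y 0 ω)) =ᵐ[P] fun _ => (0:ℝ))]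
        simp
      rw [this, hx, hVst]
    · have ho : ∀ ω, e 0 ω = 1 := by
        intro ω
        refine he_mem 0 ω ?_
        simp only [hsdef, Set.mem_setOf_eq, hitLt]
        intro j hj
        rw [Nat.le_zero.mp hj, hY0 ω]
        exact hx
      rw [hvdef]
      dsimp only
      rw [integral_congr_ae (Filter.Eventually.of_forall fun ω => by
        show e 0 ω * Vstar (Y 0 ω) = Vstar x
        rw [ho ω, hY0 ω, one_mul] : (fun ω => e 0 ω * Vstar (Y 0 ω)) =ᵐ[P] fun _ => Vstar x)]
      simp
  -- v N → 0
  have hv_lim : Tendsto v atTop (nhds (0 : ℝ)) := by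
    have hlim := tendsto_integral_of_dominated_convergence (μ := P)
      (F := fun n ω => e n ω * Vstar (Y n ω)) (f := fun _ => (0 : ℝ)) (bound := fun _ => C)
      (fun n => (hvmeas n).aestronglyMeasurable) (integrable_const C)
      (fun n => Filter.Eventually.of_forall fun ω => by
        rw [Real.norm_eq_abs]; exact hvbd n ω _ fun ω' => hC _)
      ?_
    · have : (∫ _ω, (0 : ℝ) ∂P) = 0 := by simp
      rw [this] at hlim
      exact hlim
    · filter_upwards [hproper_tau] with ω hω
      have hfin : ∃ k : ℕ, Y k ω = t := by
        by_contra hno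
        push_neg at hno
        have : hitTime t Y ω = ⊤ := by
          rw [hitTime]
          simp only [hno]
          simp
        rw [this] at hω
        exact lt_irrefl _ hω
      obtain ⟨k, hk⟩ := hfin
      have hev : ∀ N ≥ k, e N ω * Vstar (Y N ω) = 0 := by
        intro N hN
        have : ω ∉ s N := by
          simp only [hsdef, Set.mem_setOf_eq, hitLt]
          push_neg
          exact ⟨k, hN, hk⟩
        rw [he_notmem N ω this, zero_mul]
      exact Tendsto.congr'
        (Filter.eventually_atTop.2 ⟨k, fun N hN => (hev N hN).symm⟩) tendsto_const_nhds
  -- partial sums of α converge to Jr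
  set Jr : ℝ := (totalCost P t f π Y).toReal with hJrdef
  have hαsum : HasSum α Jr := by
    have hsummable : Summable α := by
      have h1 := ENNReal.summable_toReal (f := aN) (by rw [← htc]; exact hproper_J.ne)
      refine h1.congr fun n => by rw [hαtoReal n]
    have htsum : (∑' n, α n) = Jr := by
      rw [hJrdef, htc, ENNReal.tsum_toReal_eq haNtop]
      exact tsum_congr fun n => by rw [hαtoReal n]
    exact htsum ▸ hsummable.hasSum
  have hctend : Tendsto (fun N => ∑ n ∈ Finset.range N, c n) atTop
      (nhds (Jr - Vstar x)) := by
    have hrw : (fun N => ∑ n ∈ Finset.range N, c n)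
        = fun N => (∑ n ∈ Finset.range N, α n) + v N - v 0 := funext htel
    rw [hrw, hv0]
    have h1 := (hαsum.tendsto_sum_nat.add hv_lim).sub
      (tendsto_const_nhds (x := Vstar x) (f := atTop))
    simpa using h1
  have hcpt_nonneg : ∀ n ω, 0 ≤ e n ω * advantage μ f F Vstar (Y n ω) (π (Y n ω)) := by
    intro n ω
    by_cases h : ω ∈ s n
    · have hYnt : Y n ω ≠ t := by
        simp only [hsdef, Set.mem_setOf_eq, hitLt] at h
        exact h n le_rfl
      exact mul_nonneg (he_nonneg n ω) (hAnn _ hYnt)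
    · rw [he_notmem n ω h, zero_mul]
  have hcnn : ∀ n, 0 ≤ c n := fun n => integral_nonneg (hcpt_nonneg n)
  -- identify the RHS lintegral
  have hadvmeas : Measurable fun y => advantage μ f F Vstar y (π y) := by
    have : (fun y => advantage μ f F Vstar y (π y))
        = fun y => f y (π y) + G y - Vstar y := rfl
    rw [this]
    exact ((hfmeas.comp (measurable_id.prodMk hπmeas)).add hGmeas).sub hVsmeas
  have hif_A : ∀ (n : ℕ) (ω : Ω),
      (if (n : ℝ≥0∞) < hitTime t Y ω
        then ENNReal.ofReal (advantage μ f F Vstar (Y n ω) (π (Y n ω))) else 0)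
        = ENNReal.ofReal (e n ω * advantage μ f F Vstar (Y n ω) (π (Y n ω))) := by
    intro n ω
    by_cases h : ω ∈ s n
    · have h' : ((n : ℕ) : ℝ≥0∞) < hitTime t Y ω := h
      rw [if_pos h', he_mem n ω h, one_mul]
    · have h' : ¬(((n : ℕ) : ℝ≥0∞) < hitTime t Y ω) := h
      rw [if_neg h', he_notmem n ω h, zero_mul, ENNReal.ofReal_zero]
  have hB : (∫⁻ ω, ∑' (k : ℕ), (if (k : ℝ≥0∞) < hitTime t Y ω
      then ENNReal.ofReal (advantage μ f F Vstar (Y k ω) (π (Y k ω))) else 0) ∂P)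
      = ENNReal.ofReal (Jr - Vstar x) := by
    have h1 : (∫⁻ ω, ∑' (k : ℕ), (if (k : ℝ≥0∞) < hitTime t Y ω
        then ENNReal.ofReal (advantage μ f F Vstar (Y k ω) (π (Y k ω))) else 0) ∂P)
        = ∑' n, ENNReal.ofReal (c n) := by
      refine Eq.trans (lintegral_congr fun ω => tsum_congr fun k => hif_A k ω) ?_
      refine Eq.trans (lintegral_tsum fun n => (((hemeas n).mul
        (hadvmeas.comp (hYmeas n))).ennreal_ofReal).aemeasurable) ?_
      exact tsum_congr fun n => (ofReal_integral_eq_lintegral_ofReal (hcint n)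
        (Filter.Eventually.of_forall (hcpt_nonneg n))).symm
    rw [h1]
    have h2 : Tendsto (fun N => ∑ n ∈ Finset.range N, ENNReal.ofReal (c n)) atTop
        (nhds (∑' n, ENNReal.ofReal (c n))) := ENNReal.tendsto_nat_tsum _
    have h3 : Tendsto (fun N => ∑ n ∈ Finset.range N, ENNReal.ofReal (c n)) atTop
        (nhds (ENNReal.ofReal (Jr - Vstar x))) := by
      have h4 : (fun N => ∑ n ∈ Finset.range N, ENNReal.ofReal (c n))
          = fun N => ENNReal.ofReal (∑ n ∈ Finset.range N, c n) := by
        funext N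
        rw [ENNReal.ofReal_sum_of_nonneg fun n _ => hcnn n]
      rw [h4]
      exact (ENNReal.continuous_ofReal.tendsto _).comp hctend
    exact tendsto_nhds_unique h2 h3
  have hJV : 0 ≤ Jr - Vstar x :=
    ge_of_tendsto' hctend fun N => Finset.sum_nonneg fun n _ => hcnn n
  have hJrnn : (0 : ℝ) ≤ Jr := ENNReal.toReal_nonneg
  have hJtot : totalCost P t f π Y = ENNReal.ofReal Jr :=
    (ENNReal.ofReal_toReal hproper_J.ne).symm
  rw [hJtot, hB, EReal.coe_ennreal_ofReal, EReal.coe_ennreal_ofReal,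
    max_eq_left (by exact_mod_cast hJrnn), max_eq_left (by exact_mod_cast hJV),
    ← EReal.coe_add]
  norm_cast
  ring
end

section
/- Rollout performance bound: suppose V* is bounded with V*(t) = 0 and V* = T V*, V is bounded with V(t) = 0 and ‖V − V*‖∞ ≤ ε, π_R is the rollout policy for V, and π_R is proper from the initial state x. Then J^{π_R}(x) − V*(x) ≤ 2ε · E[τ], where τ is the hitting time of the terminal state under π_R. -/
open MeasureTheory ProbabilityTheory Filter
open scoped ENNReal

section RolloutAux

open scoped Classical

lemma hitTime_le' {X Ω : Type*} {t : X} {Y : ℕ → Ω → X} {k : ℕ} {ω : Ω}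
    (h : Y k ω = t) : hitTime t Y ω ≤ k :=
  iInf₂_le k h

lemma hitTime_lt_iff' {X Ω : Type*} {t : X} {Y : ℕ → Ω → X}
    (habs : ∀ ω ⦃j k : ℕ⦄, j ≤ k → Y j ω = t → Y k ω = t)
    (k : ℕ) (ω : Ω) : (k : ℝ≥0∞) < hitTime t Y ω ↔ Y k ω ≠ t := by
  constructor
  · intro h ht
    exact absurd (hitTime_le' ht) (not_le.2 h)
  · intro h
    have : ((k : ℝ≥0∞) + 1) ≤ hitTime t Y ω := by
      refine le_iInf₂ fun j hj => ?_
      have hkj : k < j := by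
        by_contra hc
        exact h (habs ω (not_lt.1 hc) hj)
      exact_mod_cast Nat.succ_le_of_lt hkj
    exact lt_of_lt_of_le (ENNReal.lt_add_right (by simp) one_ne_zero) this

lemma hitTime_eq_top' {X Ω : Type*} {t : X} {Y : ℕ → Ω → X} {ω : Ω}
    (h : ∀ k, Y k ω ≠ t) : hitTime t Y ω = ⊤ := by
  simp [hitTime, h]

lemma hitTime_eq_tsum' {X Ω : Type*} {t : X} {Y : ℕ → Ω → X}
    (habs : ∀ ω ⦃j k : ℕ⦄, j ≤ k → Y j ω = t → Y k ω = t) (ω : Ω) :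
    hitTime t Y ω = ∑' k : ℕ, (if Y k ω = t then 0 else 1) := by
  by_cases hex : ∃ N, Y N ω = t
  · set N := Nat.find hex with hN
    have hYN : Y N ω = t := Nat.find_spec hex
    have hmin : ∀ j, Y j ω = t → N ≤ j := fun j hj => Nat.find_le hj
    have h1 : hitTime t Y ω = N := by
      refine le_antisymm (hitTime_le' hYN) (le_iInf₂ fun j hj => ?_)
      exact_mod_cast hmin j hj
    have h2 : (∑' k : ℕ, (if Y k ω = t then 0 else 1) : ℝ≥0∞)
        = ∑ k ∈ Finset.range N, (if Y k ω = t then 0 else 1) := by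
      refine tsum_eq_sum fun k hk => ?_
      have hNk : N ≤ k := not_lt.1 (fun hc => hk (Finset.mem_range.2 hc))
      have : Y k ω = t := habs ω hNk hYN
      simp [this]
    rw [h1, h2]
    have h3 : ∀ k ∈ Finset.range N, (if Y k ω = t then 0 else 1 : ℝ≥0∞) = 1 := by
      intro k hk
      have : Y k ω ≠ t := fun hc => absurd (hmin k hc) (by simpa using Finset.mem_range.mp hk)
      simp [this]
    rw [Finset.sum_congr rfl h3]
    simp
  · push_neg at hex
    rw [hitTime_eq_top' hex]
    have : ∀ k : ℕ, (if Y k ω = t then 0 else 1 : ℝ≥0∞) = 1 := fun k => by simp [hex k]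
    rw [tsum_congr this]
    exact (ENNReal.tsum_const_eq_top_of_ne_zero one_ne_zero).symm

lemma traj_absorb' {X U W : Type*} {F : X → U → W → X} {π : X → U} {t : X} {u0 : U} {x : X}
    (hπt : π t = u0) (hFt : ∀ w, F t u0 w = t) (ω : ℕ → W)
    ⦃j k : ℕ⦄ (hjk : j ≤ k) (hj : traj F π x ω j = t) : traj F π x ω k = t := by
  induction k with
  | zero => exact (Nat.le_zero.mp hjk ▸ hj)
  | succ n ih =>
    rcases Nat.le_succ_iff.mp hjk with h | h
    · have hn := ih h
      show F (traj F π x ω n) (π (traj F π x ω n)) (ω n) = t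
      rw [hn, hπt, hFt]
    · subst h; exact hj

lemma traj_depends' {X U W : Type*} [MeasurableSpace X] [MeasurableSpace U] [MeasurableSpace W]
    {F : X → U → W → X} {π : X → U} {x : X}
    (hFmeas : Measurable fun p : X × U × W => F p.1 p.2.1 p.2.2)
    (hπmeas : Measurable π) (k : ℕ) :
    ∃ G : (↥(Finset.range k) → W) → X, Measurable G ∧
      ∀ ω : ℕ → W, traj F π x ω k = G (fun i => ω i) := by
  induction k with
  | zero => exact ⟨fun _ => x, measurable_const, fun _ => rfl⟩
  | succ n ih =>
    obtain ⟨G, hG, hGeq⟩ := ih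
    have hsub : ∀ i : ↥(Finset.range n), (i : ℕ) ∈ Finset.range (n + 1) :=
      fun i => Finset.mem_range.2 (Nat.lt_succ_of_lt (Finset.mem_range.1 i.2))
    set R : (↥(Finset.range (n+1)) → W) → (↥(Finset.range n) → W) :=
      fun v i => v ⟨i, hsub i⟩ with hR
    have hRmeas : Measurable R :=
      measurable_pi_lambda _ fun i => measurable_pi_apply _
    refine ⟨fun v => F (G (R v)) (π (G (R v))) (v ⟨n, Finset.self_mem_range_succ n⟩),
      ?_, fun ω => ?_⟩
    · exact hFmeas.comp (((hG.comp hRmeas).prodMk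
        (((hπmeas.comp hG).comp hRmeas).prodMk (measurable_pi_apply _))))
    · show F (traj F π x ω n) (π (traj F π x ω n)) (ω n) = _
      rw [hGeq ω]

lemma trajOn_measurable' {X U W Ω : Type*} [MeasurableSpace X] [MeasurableSpace U]
    [MeasurableSpace W] [MeasurableSpace Ω]
    {F : X → U → W → X} {π : X → U} {x : X} {ξ : ℕ → Ω → W}
    (hFmeas : Measurable fun p : X × U × W => F p.1 p.2.1 p.2.2)
    (hπmeas : Measurable π) (hξmeas : ∀ k, Measurable (ξ k)) (k : ℕ) :
    Measurable (trajOn F π x ξ k) := by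
  obtain ⟨G, hG, hGeq⟩ := traj_depends' (x := x) hFmeas hπmeas k
  have : trajOn F π x ξ k = G ∘ fun ω (i : ↥(Finset.range k)) => ξ i ω := by
    funext ω; simp only [Function.comp_apply, trajOn]; exact hGeq (fun i => ξ i ω)
  rw [this]
  exact hG.comp (measurable_pi_lambda _ fun i => hξmeas i)

lemma trajOn_indep' {X U W Ω : Type*} [MeasurableSpace X] [MeasurableSpace U]
    [MeasurableSpace W] [MeasurableSpace Ω]
    {F : X → U → W → X} {π : X → U} {x : X} {ξ : ℕ → Ω → W}
    (P : Measure Ω) [IsProbabilityMeasure P]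
    (hFmeas : Measurable fun p : X × U × W => F p.1 p.2.1 p.2.2)
    (hπmeas : Measurable π) (hξmeas : ∀ k, Measurable (ξ k))
    (hξindep : iIndepFun ξ P) (k : ℕ) :
    IndepFun (trajOn F π x ξ k) (ξ k) P := by
  have hdisj : Disjoint (Finset.range k) ({k} : Finset ℕ) := by
    simp [Finset.disjoint_singleton_right]
  have hbase := hξindep.indepFun_finset (Finset.range k) {k} hdisj hξmeas
  obtain ⟨G, hG, hGeq⟩ := traj_depends' (x := x) hFmeas hπmeas k
  have h2 := hbase.comp (φ := G)
    (ψ := fun v : (↥({k} : Finset ℕ) → W) => v ⟨k, Finset.mem_singleton_self k⟩)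
    (_mγ' := ‹MeasurableSpace W›) hG (measurable_pi_apply _)
  have e1 : (G ∘ fun a (i : ↥(Finset.range k)) => ξ i a) = trajOn F π x ξ k := by
    funext ω; simp only [Function.comp_apply, trajOn]; exact (hGeq (fun i => ξ i ω)).symm
  have e2 : ((fun v : (↥({k} : Finset ℕ) → W) => v ⟨k, Finset.mem_singleton_self k⟩) ∘
      fun a (i : ↥({k} : Finset ℕ)) => ξ i a) = ξ k := rfl
  rwa [e1, e2] at h2

lemma integrable_of_bdd' {α : Type*} [MeasurableSpace α] {ν : Measure α} [IsFiniteMeasure ν]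
    {f : α → ℝ} (hf : AEStronglyMeasurable f ν) {C : ℝ} (h : ∀ a, |f a| ≤ C) :
    Integrable f ν :=
  Integrable.mono' (integrable_const C) hf (Filter.Eventually.of_forall fun a => by
    simpa [Real.norm_eq_abs] using h a)

lemma indep_integral_eq' {X W Ω : Type*} [MeasurableSpace X] [MeasurableSpace W]
    [MeasurableSpace Ω]
    (P : Measure Ω) [IsProbabilityMeasure P] (μ : Measure W) [IsProbabilityMeasure μ]
    (Yk : Ω → X) (ξk : Ω → W) (hY : Measurable Yk) (hξ : Measurable ξk)
    (hlaw : P.map ξk = μ) (hindep : IndepFun Yk ξk P)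
    (h : X × W → ℝ) (hh : Measurable h) (C : ℝ) (hbd : ∀ p, |h p| ≤ C) :
    ∫ ω, h (Yk ω, ξk ω) ∂P = ∫ ω, (∫ w, h (Yk ω, w) ∂μ) ∂P := by
  have hpairmeas : Measurable fun ω => (Yk ω, ξk ω) := hY.prodMk hξ
  have hpair : P.map (fun ω => (Yk ω, ξk ω)) = (P.map Yk).prod μ := by
    rw [← hlaw]
    exact (indepFun_iff_map_prod_eq_prod_map_map hY.aemeasurable hξ.aemeasurable).mp hindep
  have hPY : IsProbabilityMeasure (P.map Yk) := Measure.isProbabilityMeasure_map hY.aemeasurable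
  have hint : Integrable h ((P.map Yk).prod μ) :=
    integrable_of_bdd' hh.aestronglyMeasurable hbd
  calc ∫ ω, h (Yk ω, ξk ω) ∂P = ∫ p, h p ∂(P.map (fun ω => (Yk ω, ξk ω))) :=
        (integral_map hpairmeas.aemeasurable hh.aestronglyMeasurable).symm
    _ = ∫ p, h p ∂((P.map Yk).prod μ) := by rw [hpair]
    _ = ∫ y, ∫ w, h (y, w) ∂μ ∂(P.map Yk) := integral_prod h hint
    _ = ∫ ω, (∫ w, h (Yk ω, w) ∂μ) ∂P :=
        integral_map hY.aemeasurable
          (hh.stronglyMeasurable.integral_prod_right').aestronglyMeasurable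

end RolloutAux

/-- Rollout performance bound: if `V* = T V*`, `‖V - V*‖∞ ≤ ε`, and the rollout policy `π_R`
for `V` is proper from `x`, then `J^{π_R}(x) - V*(x) ≤ 2ε · E[τ]`, stated in `EReal` as
`J^{π_R}(x) ≤ V*(x) + 2ε · E[τ]`. -/
theorem rollout_performance_bound
    {X U W Ω : Type*} [MeasurableSpace X] [MeasurableSingletonClass X]
    [MeasurableSpace U] [MeasurableSpace W] [MeasurableSpace Ω]
    (μ : Measure W) [IsProbabilityMeasure μ] (P : Measure Ω) [IsProbabilityMeasure P]
    (t : X) (u0 : U) (Ua : X → Set U) (F : X → U → W → X) (f : X → U → ℝ)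
    -- SSP model: nonempty control sets, nonnegative measurable stage cost, measurable dynamics,
    -- absorbing cost-free terminal state
    (hUne : ∀ y, (Ua y).Nonempty) (hfnn : ∀ y u, 0 ≤ f y u)
    (hFmeas : Measurable fun p : X × U × W => F p.1 p.2.1 p.2.2)
    (hfmeas : Measurable fun p : X × U => f p.1 p.2)
    (hUt : Ua t = {u0}) (hft : f t u0 = 0) (hFt : ∀ w, F t u0 w = t)
    -- V* : bounded measurable, V*(t)=0, Bellman fixed point, well-defined one-step integrals
    (Vstar : X → ℝ) (hVsmeas : Measurable Vstar) (hVsbdd : ∃ C, ∀ y, |Vstar y| ≤ C)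
    (hVst : Vstar t = 0) (hVsfix : ∀ y, Vstar y = bellman μ t Ua f F Vstar y)
    (hVsint : ∀ y u, Integrable (fun w => Vstar (F y u w)) μ)
    -- V : bounded measurable surrogate with V(t)=0 and ‖V - V*‖∞ ≤ ε
    (V : X → ℝ) (hVmeas : Measurable V) (hVbdd : ∃ C, ∀ y, |V y| ≤ C) (hVt : V t = 0)
    (hVint : ∀ y u, Integrable (fun w => V (F y u w)) μ)
    (ε : ℝ) (hε : 0 ≤ ε) (happrox : ∀ y, |V y - Vstar y| ≤ ε)
    (πR : X → U) (hπmeas : Measurable πR)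
    -- rollout (one-step greedy) policy for V, with the minimum attained
    (hπt : πR t = u0)
    (hgreedy : ∀ y, y ≠ t → πR y ∈ Ua y ∧ ∀ u ∈ Ua y,
      f y (πR y) + ∫ w, V (F y (πR y) w) ∂μ ≤ f y u + ∫ w, V (F y u w) ∂μ)
    -- i.i.d. disturbance sequence with common law μ on an abstract probability space
    (ξ : ℕ → Ω → W) (hξmeas : ∀ k, Measurable (ξ k))
    (hξindep : iIndepFun ξ P)
    (hξlaw : ∀ k, P.map (ξ k) = μ)
    -- properness of the closed loop from x: τ < ∞ a.s. and J(x) < ∞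
    (x : X)
    (hproper_tau : ∀ᵐ ω ∂P, hitTime t (trajOn F πR x ξ) ω < ⊤)
    (hproper_J : totalCost P t f πR (trajOn F πR x ξ) < ⊤) :
    (totalCost P t f πR (trajOn F πR x ξ) : EReal)
      ≤ (Vstar x : EReal) +
        ((ENNReal.ofReal (2 * ε) * expHit P t (trajOn F πR x ξ) : ℝ≥0∞) : EReal) := by
  
  classical
  obtain ⟨C, hC⟩ := hVsbdd
  have hC0 : 0 ≤ C := le_trans (abs_nonneg _) (hC t)
  set Y : ℕ → Ω → X := trajOn F πR x ξ with hYdef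
  have hYmeas : ∀ k, Measurable (Y k) := trajOn_measurable' hFmeas hπmeas hξmeas
  have habs : ∀ ω ⦃j k : ℕ⦄, j ≤ k → Y j ω = t → Y k ω = t := fun ω j k hjk hj =>
    traj_absorb' hπt hFt (fun i => ξ i ω) hjk hj
  set φ : X → ℝ := fun y => f y (πR y) with hφdef
  have hφmeas : Measurable φ := hfmeas.comp (measurable_id.prodMk hπmeas)
  set h : X × W → ℝ := fun p => Vstar (F p.1 (πR p.1) p.2) with hhdef
  have hhmeas : Measurable h :=
    hVsmeas.comp (hFmeas.comp (measurable_fst.prodMk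
      ((hπmeas.comp measurable_fst).prodMk measurable_snd)))
  have hhbd : ∀ p, |h p| ≤ C := fun p => hC _
  set g : X → ℝ := fun y => ∫ w, Vstar (F y (πR y) w) ∂μ with hgdef
  have hgmeas : Measurable g :=
    (hhmeas.stronglyMeasurable.integral_prod_right' (ν := μ)).measurable
  have hgbd : ∀ y, |g y| ≤ C := by
    intro y
    have := norm_integral_le_of_norm_le_const (μ := μ)
      (f := fun w => Vstar (F y (πR y) w)) (C := C)
      (Filter.Eventually.of_forall fun w => by simpa [Real.norm_eq_abs] using hC _)
    simpa [Real.norm_eq_abs, measure_univ] using this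
  -- one-step inequality
  have hstep : ∀ y, φ y + g y ≤ Vstar y + (if y = t then 0 else 2 * ε) := by
    intro y
    by_cases hy : y = t
    · rw [if_pos hy]
      have h1 : φ y = 0 := by simp [hφdef, hy, hπt, hft]
      have h2 : g y = 0 := by simp [hgdef, hy, hπt, hFt, hVst]
      have h3 : Vstar y = 0 := by rw [hy, hVst]
      linarith
    · have hgr := (hgreedy y hy).2
      have hle1 : g y ≤ (∫ w, V (F y (πR y) w) ∂μ) + ε := by
        have hmono : ∀ w, Vstar (F y (πR y) w) ≤ V (F y (πR y) w) + ε := fun w => by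
          have h3 := happrox (F y (πR y) w); rw [abs_sub_le_iff] at h3; linarith [h3.2]
        calc g y ≤ ∫ w, (V (F y (πR y) w) + ε) ∂μ :=
              integral_mono (hVsint y (πR y))
                ((hVint y (πR y)).add (integrable_const ε)) hmono
          _ = (∫ w, V (F y (πR y) w) ∂μ) + ε := by
              rw [integral_add (hVint y (πR y)) (integrable_const ε)]; simp
      have hle2 : ∀ u : U, (∫ w, V (F y u w) ∂μ) ≤ (∫ w, Vstar (F y u w) ∂μ) + ε := by
        intro u
        have hmono : ∀ w, V (F y u w) ≤ Vstar (F y u w) + ε := fun w => by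
          have h3 := happrox (F y u w); rw [abs_sub_le_iff] at h3; linarith [h3.1]
        calc (∫ w, V (F y u w) ∂μ) ≤ ∫ w, (Vstar (F y u w) + ε) ∂μ :=
              integral_mono (hVint y u) ((hVsint y u).add (integrable_const ε)) hmono
          _ = (∫ w, Vstar (F y u w) ∂μ) + ε := by
              rw [integral_add (hVsint y u) (integrable_const ε)]; simp
      have hkey : ∀ u : Ua y, φ y + g y - 2*ε ≤ f y (u:U) + ∫ w, Vstar (F y (u:U) w) ∂μ := by
        rintro ⟨u, hu⟩
        have h4 := hgr u hu
        have h5 := hle2 u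
        simp only [hφdef]
        linarith [hle1]
      haveI : Nonempty (Ua y) := (hUne y).to_subtype
      have hVy : Vstar y = ⨅ u : Ua y, (f y (u:U) + ∫ w, Vstar (F y (u:U) w) ∂μ) := by
        rw [hVsfix y]; simp only [bellman]; rw [if_neg hy]
      have h6 : φ y + g y - 2*ε ≤ Vstar y := by
        rw [hVy]; exact le_ciInf hkey
      rw [if_neg hy]; linarith
  have hite_le : ∀ y : X, (if y = t then (0:ℝ) else 2*ε) ≤ 2*ε := by
    intro y; split <;> linarith
  have hφbd : ∀ y, |φ y| ≤ 2*C + 2*ε := by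
    intro y
    rw [abs_le]
    refine ⟨by linarith [hfnn y (πR y), hC0, hε], ?_⟩
    have h1 := hstep y
    have h2 := hite_le y
    have h3 := abs_le.1 (hC y)
    have h4 := abs_le.1 (hgbd y)
    linarith [h1, h2, h3.2, h4.1]
  -- sequences
  set a : ℕ → ℝ := fun n => ∫ ω, Vstar (Y n ω) ∂P with hadef
  set c : ℕ → ℝ := fun k => ∫ ω, φ (Y k ω) ∂P with hcdef
  set A : ℕ → Set Ω := fun k => {ω | Y k ω ≠ t} with hAdef
  have hAmeas : ∀ k, MeasurableSet (A k) := fun k =>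
    ((hYmeas k) (measurableSet_singleton t)).compl
  set p : ℕ → ℝ := fun k => (P (A k)).toReal with hpdef
  have hVsYint : ∀ n, Integrable (fun ω => Vstar (Y n ω)) P := fun n =>
    integrable_of_bdd' ((hVsmeas.comp (hYmeas n)).aestronglyMeasurable) (fun ω => hC _)
  have hφYint : ∀ k, Integrable (fun ω => φ (Y k ω)) P := fun k =>
    integrable_of_bdd' ((hφmeas.comp (hYmeas k)).aestronglyMeasurable) (fun ω => hφbd _)
  have hgYint : ∀ k, Integrable (fun ω => g (Y k ω)) P := fun k =>
    integrable_of_bdd' ((hgmeas.comp (hYmeas k)).aestronglyMeasurable) (fun ω => hgbd _)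
  -- a (k+1) via independence
  have hkey : ∀ k, a (k+1) = ∫ ω, g (Y k ω) ∂P := by
    intro k
    have := indep_integral_eq' P μ (Y k) (ξ k) (hYmeas k) (hξmeas k) (hξlaw k)
      (trajOn_indep' P hFmeas hπmeas hξmeas hξindep k) h hhmeas C hhbd
    exact this
  -- integrated one-step inequality
  have hstepint : ∀ k, c k + a (k+1) ≤ a k + 2*ε * p k := by
    intro k
    rw [hkey k]
    have hlhs : c k + ∫ ω, g (Y k ω) ∂P = ∫ ω, (φ (Y k ω) + g (Y k ω)) ∂P :=
      (integral_add (hφYint k) (hgYint k)).symm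
    have hindeq : (fun ω => if Y k ω = t then (0:ℝ) else 2*ε)
        = Set.indicator (A k) (fun _ => 2*ε) := by
      funext ω; by_cases hω : Y k ω = t <;> simp [hAdef, Set.indicator, hω]
    have hindint : Integrable (fun ω => if Y k ω = t then (0:ℝ) else 2*ε) P := by
      rw [hindeq]
      exact (integrable_const (2*ε)).indicator (hAmeas k)
    have hrhs : ∫ ω, (Vstar (Y k ω) + (if Y k ω = t then 0 else 2*ε)) ∂P
        = a k + 2*ε * p k := by
      rw [integral_add (hVsYint k) hindint]
      congr 1
      rw [hindeq, integral_indicator_const _ (hAmeas k)]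
      simp [hpdef, mul_comm, Measure.real]
    rw [hlhs, ← hrhs]
    exact integral_mono ((hφYint k).add (hgYint k)) ((hVsYint k).add hindint)
      (fun ω => hstep (Y k ω))
  -- telescoping
  have hmainrec : ∀ n, (∑ k ∈ Finset.range n, c k) + a n
      ≤ Vstar x + 2*ε * ∑ k ∈ Finset.range n, p k := by
    intro n
    induction n with
    | zero =>
      have h0 : a 0 = Vstar x := by
        simp only [hadef]
        have : ∀ ω : Ω, Y 0 ω = x := fun ω => rfl
        simp [this]
      simp [h0]
    | succ n ih =>
      rw [Finset.sum_range_succ, Finset.sum_range_succ]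
      have := hstepint n
      linarith
  -- a n → 0
  have hae0 : ∀ᵐ ω ∂P, Filter.Tendsto (fun n => Vstar (Y n ω)) atTop (nhds 0) := by
    filter_upwards [hproper_tau] with ω hω
    have hex : ∃ N, Y N ω = t := by
      by_contra hcon; push_neg at hcon
      rw [hitTime_eq_top' hcon] at hω; exact absurd hω (lt_irrefl _)
    obtain ⟨N, hN⟩ := hex
    exact tendsto_atTop_of_eventually_const (i₀ := N)
      (fun n hn => by rw [habs ω hn hN, hVst])
  have hatend : Filter.Tendsto a atTop (nhds 0) := by
    have := tendsto_integral_of_dominated_convergence (μ := P)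
      (F := fun n ω => Vstar (Y n ω)) (f := fun _ => (0:ℝ)) (bound := fun _ => C)
      (fun n => (hVsmeas.comp (hYmeas n)).aestronglyMeasurable)
      (integrable_const C)
      (fun n => Filter.Eventually.of_forall fun ω => by
        simpa [Real.norm_eq_abs] using hC (Y n ω))
      hae0
    simpa using this
  -- identify totalCost
  have hYt_of_not_lt : ∀ (k : ℕ) (ω : Ω), ¬((k:ℝ≥0∞) < hitTime t Y ω) → Y k ω = t := by
    intro k ω hk
    by_contra hcon
    exact hk ((hitTime_lt_iff' habs k ω).mpr hcon)
  have htc : totalCost P t f πR Y = ∑' k, ENNReal.ofReal (c k) := by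
    have h1 : totalCost P t f πR Y = ∫⁻ ω, ∑' k, ENNReal.ofReal (φ (Y k ω)) ∂P := by
      unfold totalCost
      congr 1; funext ω
      refine tsum_congr fun k => ?_
      by_cases hk : (k:ℝ≥0∞) < hitTime t Y ω
      · simp [hk, hφdef]
      · have hYkt := hYt_of_not_lt k ω hk
        simp [hk, hφdef, hYkt, hπt, hft]
    rw [h1, lintegral_tsum (f := fun k ω => ENNReal.ofReal (φ (Y k ω)))
      (fun k => ((hφmeas.comp (hYmeas k)).ennreal_ofReal).aemeasurable)]
    refine tsum_congr fun k => ?_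
    rw [← ofReal_integral_eq_lintegral_ofReal (hφYint k)
      (Filter.Eventually.of_forall fun ω => hfnn _ _)]
  -- identify expHit
  have hexp : expHit P t Y = ∑' k, P (A k) := by
    unfold expHit
    rw [lintegral_congr (fun ω => hitTime_eq_tsum' habs ω)]
    rw [lintegral_tsum (f := fun (k : ℕ) ω => if Y k ω = t then (0:ℝ≥0∞) else 1)
      (fun k => (Measurable.ite
        ((hYmeas k) (measurableSet_singleton t)) measurable_const
        measurable_const).aemeasurable)]
    refine tsum_congr fun k => ?_
    have he : (fun ω => if Y k ω = t then (0:ℝ≥0∞) else 1)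
        = Set.indicator (A k) (fun _ => 1) := by
      funext ω; by_cases hω : Y k ω = t <;> simp [hAdef, Set.indicator, hω]
    rw [he, lintegral_indicator (hAmeas k)]
    simp
  -- main real bound
  have main : ∀ T : ℝ, (∀ n, 2*ε * ∑ k ∈ Finset.range n, p k ≤ 2*ε*T) →
      ∃ S : ℝ, 0 ≤ S ∧ totalCost P t f πR Y = ENNReal.ofReal S ∧ S ≤ Vstar x + 2*ε*T := by
    intro T hT
    have hcnn : ∀ k, 0 ≤ c k := fun k => integral_nonneg fun ω => hfnn _ _
    have habd : ∀ n, -C ≤ a n := by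
      intro n
      have h1 : |a n| ≤ C := by
        have := norm_integral_le_of_norm_le_const (μ := P)
          (f := fun ω => Vstar (Y n ω)) (C := C)
          (Filter.Eventually.of_forall fun ω => by
            simpa [Real.norm_eq_abs] using hC (Y n ω))
        simpa [Real.norm_eq_abs, measure_univ] using this
      linarith [(abs_le.1 h1).1]
    have hpartial : ∀ n, ∑ k ∈ Finset.range n, c k ≤ Vstar x + 2*ε*T + C := by
      intro n; have h1 := hmainrec n; have h2 := hT n; linarith [habd n]
    have hsum : Summable c := summable_of_sum_range_le hcnn hpartial
    refine ⟨∑' k, c k, tsum_nonneg hcnn, ?_, ?_⟩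
    · rw [htc, ENNReal.ofReal_tsum_of_nonneg hcnn hsum]
    · have hlim : Filter.Tendsto (fun n => (∑ k ∈ Finset.range n, c k) + a n) atTop
          (nhds ((∑' k, c k) + 0)) :=
        (hsum.hasSum.tendsto_sum_nat).add hatend
      have h2 : (∑' k, c k) + 0 ≤ Vstar x + 2*ε*T :=
        le_of_tendsto hlim (Filter.Eventually.of_forall fun n =>
          le_trans (hmainrec n) (by linarith [hT n]))
      linarith
  -- conclude
  by_cases htop : expHit P t Y = ⊤
  · by_cases hε0 : ε = 0
    · obtain ⟨S, hS0, hSeq, hSle⟩ := main 0 (fun n => by simp [hε0])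
      rw [hSeq]
      have h1 : ((ENNReal.ofReal S : ℝ≥0∞) : EReal) = (S : EReal) := by
        rw [EReal.coe_ennreal_ofReal, max_eq_left hS0]
      have h2 : ENNReal.ofReal (2*ε) = 0 := by simp [hε0]
      rw [h1, h2, zero_mul]
      have h3 : S ≤ Vstar x := by rw [hε0] at hSle; linarith
      have h4 : (S : EReal) ≤ ((Vstar x : ℝ) : EReal) := by exact_mod_cast h3
      simpa using h4
    · have h2 : ENNReal.ofReal (2*ε) ≠ 0 := by
        rw [Ne, ENNReal.ofReal_eq_zero, not_le]
        rcases lt_or_eq_of_le hε with h | h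
        · linarith
        · exact absurd h.symm hε0
      rw [htop, ENNReal.mul_top h2, EReal.coe_ennreal_top,
        EReal.add_top_of_ne_bot (EReal.coe_ne_bot _)]
      exact le_top
  · set T : ℝ := (expHit P t Y).toReal with hTdef
    have hTnn : 0 ≤ T := ENNReal.toReal_nonneg
    have hpT : ∀ n, ∑ k ∈ Finset.range n, p k ≤ T := by
      intro n
      have h1 : (∑ k ∈ Finset.range n, P (A k)) ≤ expHit P t Y := by
        rw [hexp]
        exact Summable.sum_le_tsum _ (fun _ _ => zero_le) ENNReal.summable
      have h2 : ∑ k ∈ Finset.range n, p k = (∑ k ∈ Finset.range n, P (A k)).toReal := by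
        rw [ENNReal.toReal_sum (fun k _ => measure_ne_top P (A k))]
      rw [h2]
      exact ENNReal.toReal_mono htop h1
    obtain ⟨S, hS0, hSeq, hSle⟩ := main T (fun n =>
      mul_le_mul_of_nonneg_left (hpT n) (by linarith))
    rw [hSeq]
    have h1 : ((ENNReal.ofReal S : ℝ≥0∞) : EReal) = (S : EReal) := by
      rw [EReal.coe_ennreal_ofReal, max_eq_left hS0]
    have h2 : (ENNReal.ofReal (2*ε) * expHit P t Y : ℝ≥0∞) = ENNReal.ofReal (2*ε*T) := by
      conv_lhs => rw [← ENNReal.ofReal_toReal htop]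
      rw [← ENNReal.ofReal_mul (by linarith)]
    rw [h1, h2, EReal.coe_ennreal_ofReal,
      max_eq_left (mul_nonneg (by linarith) hTnn)]
    rw [← EReal.coe_add]
    exact_mod_cast hSle
end

section
/- One-step certainty-equivalent inequality: suppose V* is bounded with V*(t) = 0 and V* = T V*, V is bounded with V(t) = 0 and ‖V − V*‖∞ ≤ ε, and let δ = sup over nonterminal x and u ∈ U(x) of | ∫ V(F(x,u,w)) dμ(w) − V(F(x,u, w̄)) |, where w̄ is a fixed nominal disturbance. Let π_CE be the certainty-equivalent policy, π_CE(x) ∈ argmin_{u ∈ U(x)} ( f(x,u) + V(F(x,u, w̄)) ) for x ≠ t, π_CE(t) = 0. Then for every nonterminal x, f(x, π_CE(x)) + ∫ V*(F(x, π_CE(x), w)) dμ(w) ≤ V*(x) + 2(ε + δ); at the terminal state equality holds with both sides zero. -/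
open MeasureTheory ProbabilityTheory Filter
open scoped ENNReal

/-- One-step certainty-equivalent inequality: with `‖V - V*‖∞ ≤ ε` and model-mismatch
constant `δ`, the certainty-equivalent policy `π_CE` satisfies, at every nonterminal `x`,
`f(x, π_CE(x)) + ∫ V*(F(x, π_CE(x), w)) dμ(w) ≤ V*(x) + 2(ε + δ)`; at the terminal state both
sides of the corresponding equality are zero. -/
theorem one_step_certainty_equivalent_inequality
    {X U W : Type*} [MeasurableSpace X] [MeasurableSpace W]
    (μ : Measure W) [IsProbabilityMeasure μ]
    (t : X) (u0 : U) (Ua : X → Set U) (F : X → U → W → X) (f : X → U → ℝ)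
    (hUne : ∀ y, (Ua y).Nonempty) (hfnn : ∀ y u, 0 ≤ f y u)
    (hUt : Ua t = {u0}) (hft : f t u0 = 0) (hFt : ∀ w, F t u0 w = t)
    -- V* : bounded measurable, V*(t)=0, Bellman fixed point, well-defined one-step integrals
    (Vstar : X → ℝ) (hVsmeas : Measurable Vstar) (hVsbdd : ∃ C, ∀ y, |Vstar y| ≤ C)
    (hVst : Vstar t = 0) (hVsfix : ∀ y, Vstar y = bellman μ t Ua f F Vstar y)
    (hVsint : ∀ y u, Integrable (fun w => Vstar (F y u w)) μ)
    -- V : bounded measurable surrogate with V(t)=0 and ‖V - V*‖∞ ≤ ε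
    (V : X → ℝ) (hVmeas : Measurable V) (hVbdd : ∃ C, ∀ y, |V y| ≤ C) (hVt : V t = 0)
    (hVint : ∀ y u, Integrable (fun w => V (F y u w)) μ)
    (ε : ℝ) (hε : 0 ≤ ε) (happrox : ∀ y, |V y - Vstar y| ≤ ε)
    -- model-mismatch constant δ: uniform bound on the nominal-vs-expected one-step evaluation
    (wbar : W) (δ : ℝ)
    (hδ : ∀ y, y ≠ t → ∀ u ∈ Ua y, |(∫ w, V (F y u w) ∂μ) - V (F y u wbar)| ≤ δ)
    -- the infimum defining (T V)(y) is attained at every nonterminal y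
    (hTatt : ∀ y, y ≠ t → ∃ u ∈ Ua y, ∀ u' ∈ Ua y,
      f y u + ∫ w, V (F y u w) ∂μ ≤ f y u' + ∫ w, V (F y u' w) ∂μ)
    (πCE : X → U)
    -- certainty-equivalent policy: greedy for the nominal one-step lookahead, minimum attained
    (hπt : πCE t = u0)
    (hce : ∀ y, y ≠ t → πCE y ∈ Ua y ∧ ∀ u ∈ Ua y,
      f y (πCE y) + V (F y (πCE y) wbar) ≤ f y u + V (F y u wbar)) :
    (∀ y, y ≠ t →
      f y (πCE y) + ∫ w, Vstar (F y (πCE y) w) ∂μ ≤ Vstar y + 2 * (ε + δ)) ∧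
    f t (πCE t) + ∫ w, Vstar (F t (πCE t) w) ∂μ = 0 := by

  have hint_le : ∀ (g h : X → ℝ), (∀ z, |g z - h z| ≤ ε) →
      ∀ y u, Integrable (fun w => g (F y u w)) μ → Integrable (fun w => h (F y u w)) μ →
      ∫ w, g (F y u w) ∂μ ≤ (∫ w, h (F y u w) ∂μ) + ε := by
    intro g h hgh y u hg hh
    have : ∫ w, g (F y u w) ∂μ ≤ ∫ w, (h (F y u w) + ε) ∂μ := by
      refine integral_mono hg (hh.add (integrable_const ε)) (fun w => ?_)
      have := abs_le.mp (hgh (F y u w))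
      linarith [this.1, this.2]
    rwa [integral_add hh (integrable_const ε), integral_const, probReal_univ,
      smul_eq_mul, one_mul] at this
  constructor
  · intro y hy
    obtain ⟨huCE, hgreedy⟩ := hce y hy
    haveI : Nonempty (Ua y) := (hUne y).to_subtype
    have hb : Vstar y = ⨅ u : Ua y, (f y (u : U) + ∫ w, Vstar (F y (u : U) w) ∂μ) := by
      rw [hVsfix y]; simp [bellman, hy]
    have key : ∀ u : Ua y,
        f y (πCE y) + (∫ w, Vstar (F y (πCE y) w) ∂μ) - 2 * (ε + δ)
          ≤ f y (u : U) + ∫ w, Vstar (F y (u : U) w) ∂μ := by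
      intro u
      have h1 : ∫ w, Vstar (F y (πCE y) w) ∂μ ≤ (∫ w, V (F y (πCE y) w) ∂μ) + ε :=
        hint_le Vstar V (fun z => by have := happrox z; rw [abs_sub_comm] at this; exact this)
          y (πCE y) (hVsint y (πCE y)) (hVint y (πCE y))
      have h2 := abs_le.mp (hδ y hy (πCE y) huCE)
      have h3 := hgreedy (u : U) u.2
      have h4 := abs_le.mp (hδ y hy (u : U) u.2)
      have h5 : ∫ w, V (F y (u : U) w) ∂μ ≤ (∫ w, Vstar (F y (u : U) w) ∂μ) + ε :=
        hint_le V Vstar happrox y (u : U) (hVint y u) (hVsint y u)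
      linarith [h2.1, h2.2, h4.1, h4.2]
    have := le_ciInf key
    rw [← hb] at this
    linarith
  · simp only [hπt, hft, hFt, hVst, integral_const, smul_eq_mul, mul_zero, add_zero]
end
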